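/- Existence of the rough integral (Proposition 2.1, one-dimensional case): Let (𝕏^n)_{n ≤ k} be a one-dimensional α-Hölder rough path on [0,T] and (Y^{(1)}, …, Y^{(k)}) a controlled path. Then for every 0 ≤ s ≤ t ≤ T the compensated Riemann sums converge: there exists a real number I_{s,t} such that for every ε > 0 there is δ > 0 such that for every partition s = t_0 < t_1 < ⋯ < t_N = t of [s,t] with mesh < δ one has |∑_{m=0}^{N−1} ∑_{i=1}^{k} Y^{(i)}_{t_m} · 𝕏^i_{t_m, t_{m+1}} − I_{s,t}| < ε. Moreover there is a constant K (depending only on k, α, T and the rough-path and controlled-path constants) such that |I_{s,t} − ∑_{i=1}^{k} Y^{(i)}_s · 𝕏^i_{s,t}| ≤ K·(t−s)^{(k+1)α} for all 0 ≤ s ≤ t ≤ T. The number I_{s,t} is the rough integral ∫_s^t Y d𝕏. -/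

import Mathlib

open Finset

private lemma part_mono {β : Type*} [Preorder β] {N : ℕ} {π : ℕ → β}
    (hπ : ∀ m < N, π m < π (m+1)) :
    ∀ i j, i ≤ j → j ≤ N → π i ≤ π j := by
  intro i j hij hjN
  induction j with
  | zero => obtain rfl : i = 0 := by omega
            exact le_refl _
  | succ n ih =>
    rcases Nat.eq_or_lt_of_le hij with h | h
    · rw [h]
    · exact le_trans (ih (by omega) (by omega)) (le_of_lt (hπ n (by omega)))

private lemma deltaA
    (T α : ℝ) (hα : 0 < α)
    (k : ℕ)
    (𝕏 : ℕ → ℝ → ℝ → ℝ) (C𝕏 : ℝ)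
    (h0 : ∀ s t : ℝ, 0 ≤ s → s ≤ t → t ≤ T → 𝕏 0 s t = 1)
    (hChen : ∀ n, n ≤ k → ∀ s u t : ℝ, 0 ≤ s → s ≤ u → u ≤ t → t ≤ T →
      𝕏 n s t = ∑ j ∈ Finset.range (n + 1), 𝕏 j s u * 𝕏 (n - j) u t)
    (hHol : ∀ n, 1 ≤ n → n ≤ k → ∀ s t : ℝ, 0 ≤ s → s ≤ t → t ≤ T →
      |𝕏 n s t| ≤ C𝕏 * (t - s) ^ ((n : ℝ) * α))
    (Y : ℕ → ℝ → ℝ) (CY : ℝ)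
    (hY : ∀ i, 1 ≤ i → i ≤ k → ∀ s t : ℝ, 0 ≤ s → s ≤ t → t ≤ T →
      |Y i t - Y i s - ∑ j ∈ Finset.Icc (i + 1) k, Y j s * 𝕏 (j - i) s t|
        ≤ CY * (t - s) ^ (((k + 1 - i : ℕ) : ℝ) * α)) :
    ∀ s u t : ℝ, 0 ≤ s → s ≤ u → u ≤ t → t ≤ T →
      |(∑ i ∈ Finset.Icc 1 k, Y i s * 𝕏 i s t)
        - (∑ i ∈ Finset.Icc 1 k, Y i s * 𝕏 i s u)
        - (∑ i ∈ Finset.Icc 1 k, Y i u * 𝕏 i u t)|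
      ≤ ((k : ℝ) * (max C𝕏 0 * max CY 0)) * (t - s) ^ (((k + 1 : ℕ) : ℝ) * α) := by
  intro s u t hs hsu hut htT
  have huT : u ≤ T := le_trans hut htT
  have hst : s ≤ t := le_trans hsu hut
  -- Step 1: algebraic identity
  have expand : ∀ i ∈ Finset.Icc 1 k, Y i s * 𝕏 i s t
      = Y i s * 𝕏 i u t + Y i s * 𝕏 i s u
        + ∑ j ∈ Finset.Ico 1 i, Y i s * (𝕏 j s u * 𝕏 (i-j) u t) := by
    intro i hi
    rw [Finset.mem_Icc] at hi
    rw [hChen i hi.2 s u t hs hsu hut htT]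
    have hset : Finset.range (i+1) = insert 0 (insert i (Finset.Ico 1 i)) := by
      ext j; simp only [Finset.mem_range, Finset.mem_insert, Finset.mem_Ico]; omega
    rw [hset, Finset.sum_insert (by simp only [Finset.mem_insert, Finset.mem_Ico]; omega),
      Finset.sum_insert (by simp only [Finset.mem_Ico]; omega)]
    rw [Nat.sub_self, Nat.sub_zero, h0 s u hs hsu huT, h0 u t (le_trans hs hsu) hut htT]
    simp only [one_mul, mul_one, mul_add, Finset.mul_sum]
    rw [add_assoc]
  have swap : ∑ i ∈ Finset.Icc 1 k, ∑ j ∈ Finset.Ico 1 i, Y i s * (𝕏 j s u * 𝕏 (i-j) u t)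
      = ∑ m ∈ Finset.Icc 1 k, ∑ j ∈ Finset.Icc (m+1) k, Y j s * 𝕏 (j-m) s u * 𝕏 m u t := by
    rw [Finset.sum_sigma', Finset.sum_sigma']
    apply Finset.sum_nbij' (i := fun p => (⟨p.1 - p.2, p.1⟩ : Σ _ : ℕ, ℕ))
      (j := fun p => (⟨p.2, p.2 - p.1⟩ : Σ _ : ℕ, ℕ))
    · intro a ha
      simp only [Finset.mem_sigma, Finset.mem_Icc, Finset.mem_Ico] at ha ⊢
      omega
    · intro a ha
      simp only [Finset.mem_sigma, Finset.mem_Icc, Finset.mem_Ico] at ha ⊢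
      omega
    · rintro ⟨x, y⟩ ha
      simp only [Finset.mem_sigma, Finset.mem_Icc, Finset.mem_Ico] at ha
      have h2 : x - (x - y) = y := by omega
      simp [h2]
    · rintro ⟨x, y⟩ ha
      simp only [Finset.mem_sigma, Finset.mem_Icc, Finset.mem_Ico] at ha
      have h2 : y - (y - x) = x := by omega
      simp [h2]
    · intro a ha
      simp only [Finset.mem_sigma, Finset.mem_Icc, Finset.mem_Ico] at ha
      have : a.1 - (a.1 - a.2) = a.2 := by omega
      rw [this]
      ring
  have key : (∑ i ∈ Finset.Icc 1 k, Y i s * 𝕏 i s t)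
        - (∑ i ∈ Finset.Icc 1 k, Y i s * 𝕏 i s u)
        - (∑ i ∈ Finset.Icc 1 k, Y i u * 𝕏 i u t)
      = -∑ m ∈ Finset.Icc 1 k,
          (Y m u - Y m s - ∑ j ∈ Finset.Icc (m+1) k, Y j s * 𝕏 (j-m) s u) * 𝕏 m u t := by
    rw [Finset.sum_congr rfl expand]
    rw [Finset.sum_add_distrib, Finset.sum_add_distrib, swap]
    simp only [sub_mul, Finset.sum_sub_distrib, Finset.sum_mul]
    ring
  rw [key, abs_neg]
  refine le_trans (Finset.abs_sum_le_sum_abs _ _) ?_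
  have hbound : ∀ m ∈ Finset.Icc 1 k,
      |(Y m u - Y m s - ∑ j ∈ Finset.Icc (m+1) k, Y j s * 𝕏 (j-m) s u) * 𝕏 m u t|
        ≤ (max C𝕏 0 * max CY 0) * (t - s) ^ (((k + 1 : ℕ) : ℝ) * α) := by
    intro m hm
    rw [Finset.mem_Icc] at hm
    have h1 := hY m hm.1 hm.2 s u hs hsu huT
    have h2 := hHol m hm.1 hm.2 u t (le_trans hs hsu) hut htT
    rw [abs_mul]
    have hX : 0 ≤ (u - s) ^ (((k + 1 - m : ℕ) : ℝ) * α) := Real.rpow_nonneg (by linarith) _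
    have hZ : 0 ≤ (t - u) ^ ((m : ℝ) * α) := Real.rpow_nonneg (by linarith) _
    have hXle : (u - s) ^ (((k + 1 - m : ℕ) : ℝ) * α) ≤ (t - s) ^ (((k + 1 - m : ℕ) : ℝ) * α) :=
      Real.rpow_le_rpow (by linarith) (by linarith) (by positivity)
    have hZle : (t - u) ^ ((m : ℝ) * α) ≤ (t - s) ^ ((m : ℝ) * α) :=
      Real.rpow_le_rpow (by linarith) (by linarith) (by positivity)
    have he : ((k + 1 - m : ℕ) : ℝ) * α + (m : ℝ) * α = ((k + 1 : ℕ) : ℝ) * α := by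
      rw [Nat.cast_sub (by omega)]
      push_cast
      ring
    calc |Y m u - Y m s - ∑ j ∈ Finset.Icc (m+1) k, Y j s * 𝕏 (j-m) s u| * |𝕏 m u t|
        ≤ (CY * (u - s) ^ (((k + 1 - m : ℕ) : ℝ) * α)) * (C𝕏 * (t - u) ^ ((m : ℝ) * α)) :=
          mul_le_mul h1 h2 (abs_nonneg _) (le_trans (abs_nonneg _) h1)
      _ ≤ (max CY 0 * (u - s) ^ (((k + 1 - m : ℕ) : ℝ) * α))
            * (max C𝕏 0 * (t - u) ^ ((m : ℝ) * α)) := by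
          apply mul_le_mul
          · exact mul_le_mul_of_nonneg_right (le_max_left _ _) hX
          · exact mul_le_mul_of_nonneg_right (le_max_left _ _) hZ
          · exact le_trans (abs_nonneg _) h2
          · positivity
      _ = (max C𝕏 0 * max CY 0)
            * ((u - s) ^ (((k + 1 - m : ℕ) : ℝ) * α) * (t - u) ^ ((m : ℝ) * α)) := by ring
      _ ≤ (max C𝕏 0 * max CY 0)
            * ((t - s) ^ (((k + 1 - m : ℕ) : ℝ) * α) * (t - s) ^ ((m : ℝ) * α)) := by
          apply mul_le_mul_of_nonneg_left _ (by positivity)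
          exact mul_le_mul hXle hZle hZ (Real.rpow_nonneg (by linarith) _)
      _ = (max C𝕏 0 * max CY 0) * (t - s) ^ (((k + 1 : ℕ) : ℝ) * α) := by
          rw [← Real.rpow_add' (by linarith) (by rw [he]; positivity), he]
  refine le_trans (Finset.sum_le_sum hbound) ?_
  apply le_of_eq
  rw [Finset.sum_const, Nat.card_Icc, nsmul_eq_mul]
  push_cast
  ring

private lemma lemB (T θ C2 : ℝ) (A : ℝ → ℝ → ℝ) (hθ : 0 ≤ θ) (hC2 : 0 ≤ C2)
    (hδ : ∀ s u t : ℝ, 0 ≤ s → s ≤ u → u ≤ t → t ≤ T →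
      |A s t - A s u - A u t| ≤ C2 * (t - s) ^ θ) :
    ∀ N : ℕ, ∀ π : ℕ → ℝ, (∀ m < N + 1, π m < π (m+1)) → 0 ≤ π 0 → π (N+1) ≤ T →
      |(∑ m ∈ Finset.range (N+1), A (π m) (π (m+1))) - A (π 0) (π (N+1))|
        ≤ C2 * (2*(π (N+1) - π 0))^θ * ∑ n ∈ Finset.Icc 1 N, (((n:ℝ))^θ)⁻¹ := by
  intro N
  induction N with
  | zero =>
    intro π hπ h0 hT
    simp
  | succ N ih =>
    intro π hπ h0 hT
    show |(∑ m ∈ Finset.range (N+2), A (π m) (π (m+1))) - A (π 0) (π (N+2))|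
        ≤ C2 * (2*(π (N+2) - π 0))^θ * ∑ n ∈ Finset.Icc 1 (N+1), (((n:ℝ))^θ)⁻¹
    have hmono := part_mono hπ
    -- pigeonhole : find a point to remove
    have htele1 : ∑ m ∈ Finset.range (N+1), (π (m+1+1) - π (m+1)) = π (N+1+1) - π 1 :=
      Finset.sum_range_sub (fun m => π (m+1)) (N+1)
    have htele2 : ∑ m ∈ Finset.range (N+1), (π (m+1) - π m) = π (N+1) - π 0 :=
      Finset.sum_range_sub π (N+1)
    have hsum : ∑ m ∈ Finset.range (N+1), (π (m+2) - π m)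
        ≤ ∑ m ∈ Finset.range (N+1), (2*(π (N+2) - π 0))/((N:ℝ)+1) := by
      have : ∑ m ∈ Finset.range (N+1), (π (m+2) - π m)
          = ∑ m ∈ Finset.range (N+1), ((π (m+1+1) - π (m+1)) + (π (m+1) - π m)) := by
        apply Finset.sum_congr rfl; intro m _; ring
      rw [this, Finset.sum_add_distrib, htele1, htele2, Finset.sum_const,
        Finset.card_range, nsmul_eq_mul]
      have h1 : π 0 ≤ π 1 := hmono 0 1 (by omega) (by omega)
      have h2 : π (N+1) ≤ π (N+2) := hmono (N+1) (N+2) (by omega) (by omega)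
      have h3 : ((N+1:ℕ):ℝ) * (2 * (π (N + 2) - π 0) / ((N:ℝ)+1)) = 2 * (π (N + 2) - π 0) := by
        have : ((N:ℝ)+1) ≠ 0 := by positivity
        push_cast
        field_simp
      rw [h3]
      have h4 : π (N+1+1) = π (N+2) := by congr 1
      linarith
    obtain ⟨m, hmmem, hmle⟩ := Finset.exists_le_of_sum_le ⟨0, by simp⟩ hsum
    rw [Finset.mem_range] at hmmem
    -- the reduced partition
    set π' : ℕ → ℝ := fun l => if l < m + 1 then π l else π (l+1) with hπ'def
    have hπ'lt : ∀ l < N + 1, π' l < π' (l+1) := by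
      intro l hl
      simp only [hπ'def]
      rcases lt_trichotomy l m with h | h | h
      · rw [if_pos (by omega), if_pos (by omega)]
        exact hπ l (by omega)
      · subst h
        rw [if_pos (by omega), if_neg (by omega)]
        exact lt_trans (hπ l (by omega)) (hπ (l+1) (by omega))
      · rw [if_neg (by omega), if_neg (by omega)]
        exact hπ (l+1) (by omega)
    have hπ'0 : π' 0 = π 0 := by simp [hπ'def]
    have hπ'N : π' (N+1) = π (N+2) := by simp only [hπ'def]; rw [if_neg (by omega)]
    -- sum identity
    have hsplit : (∑ l ∈ Finset.range (N+2), A (π l) (π (l+1)))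
        - (∑ l ∈ Finset.range (N+1), A (π' l) (π' (l+1)))
        = A (π m) (π (m+1)) + A (π (m+1)) (π (m+2)) - A (π m) (π (m+2)) := by
      have e1 : ∑ l ∈ Finset.range (N+2), A (π l) (π (l+1))
          = (∑ l ∈ Finset.Ico 0 m, A (π l) (π (l+1)))
            + (A (π m) (π (m+1)) + (A (π (m+1)) (π (m+2))
              + ∑ l ∈ Finset.Ico (m+2) (N+2), A (π l) (π (l+1)))) := by
        rw [Finset.range_eq_Ico, ← Finset.sum_Ico_consecutive _ (Nat.zero_le m) (by omega),
          Finset.sum_eq_sum_Ico_succ_bot (by omega : m < N+2),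
          Finset.sum_eq_sum_Ico_succ_bot (by omega : m+1 < N+2)]
      have e2 : ∑ l ∈ Finset.range (N+1), A (π' l) (π' (l+1))
          = (∑ l ∈ Finset.Ico 0 m, A (π l) (π (l+1)))
            + (A (π m) (π (m+2))
              + ∑ l ∈ Finset.Ico (m+2) (N+2), A (π l) (π (l+1))) := by
        rw [Finset.range_eq_Ico, ← Finset.sum_Ico_consecutive _ (Nat.zero_le m) (by omega : m ≤ N+1),
          Finset.sum_eq_sum_Ico_succ_bot (by omega : m < N+1)]
        congr 1
        · apply Finset.sum_congr rfl
          intro l hl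
          rw [Finset.mem_Ico] at hl
          simp only [hπ'def]
          rw [if_pos (by omega), if_pos (by omega)]
        congr 1
        · simp only [hπ'def]
          rw [if_pos (by omega), if_neg (by omega)]
        · apply Finset.sum_nbij' (i := fun l => l + 1) (j := fun l => l - 1)
          · intro a ha; rw [Finset.mem_Ico] at *; omega
          · intro a ha; rw [Finset.mem_Ico] at *; omega
          · intro a ha; rw [Finset.mem_Ico] at ha; omega
          · intro a ha; rw [Finset.mem_Ico] at ha; omega
          · intro a ha
            rw [Finset.mem_Ico] at ha
            simp only [hπ'def]
            rw [if_neg (by omega), if_neg (by omega)]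
      rw [e1, e2]
      ring
    have hb : 0 ≤ π (N+2) - π 0 := sub_nonneg.mpr (hmono 0 (N+2) (by omega) (by omega))
    have hIH := ih π' hπ'lt (by rw [hπ'0]; exact h0) (by rw [hπ'N]; exact hT)
    rw [hπ'0, hπ'N] at hIH
    have h0m : 0 ≤ π m := le_trans h0 (hmono 0 m (by omega) (by omega))
    have hδm := hδ (π m) (π (m+1)) (π (m+2)) h0m
      (le_of_lt (hπ m (by omega))) (le_of_lt (hπ (m+1) (by omega)))
      (le_trans (hmono (m+2) (N+2) (by omega) (by omega)) hT)
    have hgap : 0 ≤ π (m+2) - π m := by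
      have g1 := hπ m (by omega); have g2 := hπ (m+1) (by omega); linarith
    have hstep : |(∑ l ∈ Finset.range (N+2), A (π l) (π (l+1)))
          - (∑ l ∈ Finset.range (N+1), A (π' l) (π' (l+1)))|
        ≤ C2 * (2*(π (N+2) - π 0)/((N:ℝ)+1))^θ := by
      rw [hsplit]
      have heq : |A (π m) (π (m+1)) + A (π (m+1)) (π (m+2)) - A (π m) (π (m+2))|
          = |A (π m) (π (m+2)) - A (π m) (π (m+1)) - A (π (m+1)) (π (m+2))| := by
        rw [abs_sub_comm, ← sub_sub]
      rw [heq]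
      refine le_trans hδm (mul_le_mul_of_nonneg_left ?_ hC2)
      exact Real.rpow_le_rpow hgap hmle hθ
    have key2 : (∑ l ∈ Finset.range (N+2), A (π l) (π (l+1))) - A (π 0) (π (N+2))
        = ((∑ l ∈ Finset.range (N+1), A (π' l) (π' (l+1))) - A (π 0) (π (N+2)))
          + ((∑ l ∈ Finset.range (N+2), A (π l) (π (l+1)))
              - (∑ l ∈ Finset.range (N+1), A (π' l) (π' (l+1)))) := by ring
    have habs : |(∑ m ∈ Finset.range (N+2), A (π m) (π (m+1))) - A (π 0) (π (N+2))|
        ≤ |(∑ l ∈ Finset.range (N+1), A (π' l) (π' (l+1))) - A (π 0) (π (N+2))|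
          + |(∑ l ∈ Finset.range (N+2), A (π l) (π (l+1)))
              - (∑ l ∈ Finset.range (N+1), A (π' l) (π' (l+1)))| := by
      rw [key2]; exact abs_add_le _ _
    refine le_trans habs ?_
    refine le_trans (add_le_add hIH hstep) ?_
    rw [Finset.sum_Icc_succ_top (by omega : 1 ≤ N+1), mul_add]
    apply add_le_add (le_refl _)
    apply le_of_eq
    rw [Real.div_rpow (by linarith) (by positivity), div_eq_mul_inv]
    push_cast
    ring

noncomputable def zC (θ : ℝ) : ℝ := ∑' n : ℕ, (((n:ℝ))^θ)⁻¹

private lemma zC_nonneg (θ : ℝ) : 0 ≤ zC θ :=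
  tsum_nonneg (fun n => by positivity)

private lemma sum_le_zC {θ : ℝ} (hθ : 1 < θ) (s : Finset ℕ) :
    ∑ n ∈ s, (((n:ℝ))^θ)⁻¹ ≤ zC θ :=
  Summable.sum_le_tsum s (fun n _ => by positivity)
    (Real.summable_nat_rpow_inv.mpr hθ)

private lemma lemB2 (T θ C2 : ℝ) (A : ℝ → ℝ → ℝ) (hθ : 1 < θ) (hC2 : 0 ≤ C2)
    (hδ : ∀ s u t : ℝ, 0 ≤ s → s ≤ u → u ≤ t → t ≤ T →
      |A s t - A s u - A u t| ≤ C2 * (t - s) ^ θ) :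
    ∀ N : ℕ, ∀ π : ℕ → ℝ, 1 ≤ N → (∀ m < N, π m < π (m+1)) → 0 ≤ π 0 → π N ≤ T →
      |(∑ m ∈ Finset.range N, A (π m) (π (m+1))) - A (π 0) (π N)|
        ≤ (C2 * 2^θ * zC θ) * (π N - π 0)^θ := by
  intro N π hN hπ h0 hT
  obtain ⟨N', rfl⟩ : ∃ N', N = N' + 1 := ⟨N - 1, by omega⟩
  have hb : 0 ≤ π (N'+1) - π 0 :=
    sub_nonneg.mpr (part_mono hπ 0 (N'+1) (by omega) (by omega))
  refine le_trans (lemB T θ C2 A (by linarith) hC2 hδ N' π hπ h0 hT) ?_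
  have h2 : (2*(π (N'+1) - π 0))^θ = 2^θ * (π (N'+1) - π 0)^θ :=
    Real.mul_rpow (by norm_num) hb
  rw [h2]
  have := sum_le_zC hθ (Finset.Icc 1 N')
  calc C2 * (2 ^ θ * (π (N' + 1) - π 0) ^ θ) * ∑ n ∈ Finset.Icc 1 N', (((n:ℝ))^θ)⁻¹
      ≤ C2 * (2 ^ θ * (π (N' + 1) - π 0) ^ θ) * zC θ := by
        apply mul_le_mul_of_nonneg_left this
        positivity
    _ = (C2 * 2^θ * zC θ) * (π (N'+1) - π 0)^θ := by ring

private lemma sum_blocks (f : ℕ → ℝ) (σ : ℕ → ℕ) :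
    ∀ M : ℕ, σ 0 = 0 → (∀ m < M, σ m ≤ σ (m+1)) →
      ∑ l ∈ Finset.range (σ M), f l
        = ∑ m ∈ Finset.range M, ∑ l ∈ Finset.Ico (σ m) (σ (m+1)), f l := by
  intro M
  induction M with
  | zero => intro h _; simp [h]
  | succ M ih =>
    intro h hmono
    rw [Finset.sum_range_succ, ← ih h (fun m hm => hmono m (by omega))]
    rw [Finset.range_eq_Ico, Finset.range_eq_Ico]
    exact (Finset.sum_Ico_consecutive f (Nat.zero_le (σ M)) (hmono M (by omega))).symm

private lemma lemB3 (T θ C2 : ℝ) (A : ℝ → ℝ → ℝ) (hθ : 1 < θ) (hC2 : 0 ≤ C2)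
    (hδ : ∀ s u t : ℝ, 0 ≤ s → s ≤ u → u ≤ t → t ≤ T →
      |A s t - A s u - A u t| ≤ C2 * (t - s) ^ θ)
    (p q : ℕ) (ρ : ℕ → ℝ) (hpq : p < q)
    (hρ : ∀ l, p ≤ l → l < q → ρ l < ρ (l+1))
    (h0 : 0 ≤ ρ p) (hT : ρ q ≤ T) :
    |(∑ l ∈ Finset.Ico p q, A (ρ l) (ρ (l+1))) - A (ρ p) (ρ q)|
      ≤ (C2 * 2^θ * zC θ) * (ρ q - ρ p)^θ := by
  have hconv : ∑ l ∈ Finset.Ico p q, A (ρ l) (ρ (l+1))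
      = ∑ i ∈ Finset.range (q - p), A (ρ (p + i)) (ρ (p + (i + 1))) := by
    rw [Finset.sum_Ico_eq_sum_range]
    apply Finset.sum_congr rfl
    intro i _
    rw [show p + (i + 1) = p + i + 1 by omega]
  have h1 : ∀ m < q - p, ρ (p + m) < ρ (p + (m + 1)) := by
    intro m hm
    rw [show p + (m + 1) = (p + m) + 1 by omega]
    exact hρ (p + m) (by omega) (by omega)
  have h2 := lemB2 T θ C2 A hθ hC2 hδ (q - p) (fun l => ρ (p + l))
    (by omega) h1 (by simpa using h0)
    (by show ρ (p + (q - p)) ≤ T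
        rw [show p + (q - p) = q by omega]; exact hT)
  rw [hconv]
  simp only [Nat.add_zero, show p + (q - p) = q by omega] at h2
  exact h2

private lemma lemC (T θ C2 : ℝ) (A : ℝ → ℝ → ℝ) (hθ : 1 < θ) (hC2 : 0 ≤ C2)
    (hδ : ∀ s u t : ℝ, 0 ≤ s → s ≤ u → u ≤ t → t ≤ T →
      |A s t - A s u - A u t| ≤ C2 * (t - s) ^ θ)
    (N : ℕ) (π : ℕ → ℝ)
    (hπ : ∀ m < N, π m < π (m+1)) (h00 : 0 ≤ π 0) (hTT : π N ≤ T)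
    (ρ : ℕ → ℝ) (σ : ℕ → ℕ) (hσ0 : σ 0 = 0)
    (hσ : ∀ m < N, σ m < σ (m+1))
    (hag : ∀ m ≤ N, ρ (σ m) = π m)
    (hρ : ∀ l < σ N, ρ l < ρ (l+1))
    (δ : ℝ) (hmesh : ∀ m < N, π (m+1) - π m ≤ δ) :
    |(∑ l ∈ Finset.range (σ N), A (ρ l) (ρ (l+1)))
        - ∑ m ∈ Finset.range N, A (π m) (π (m+1))|
      ≤ (C2 * 2^θ * zC θ) * δ^(θ-1) * (π N - π 0) := by
  have hσmono := part_mono (π := σ) (N := N) hσ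
  have hπmono := part_mono hπ
  rw [sum_blocks _ σ N hσ0 (fun m hm => le_of_lt (hσ m hm)), ← Finset.sum_sub_distrib]
  refine le_trans (Finset.abs_sum_le_sum_abs _ _) ?_
  have hterm : ∀ m ∈ Finset.range N,
      |(∑ l ∈ Finset.Ico (σ m) (σ (m+1)), A (ρ l) (ρ (l+1))) - A (π m) (π (m+1))|
        ≤ (C2 * 2^θ * zC θ) * (δ^(θ-1) * (π (m+1) - π m)) := by
    intro m hm
    rw [Finset.mem_range] at hm
    have hbl := lemB3 T θ C2 A hθ hC2 hδ (σ m) (σ (m+1)) ρ (hσ m hm)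
      (fun l h1 h2 => hρ l (lt_of_lt_of_le h2 (hσmono (m+1) N (by omega) (le_refl N))))
      (by rw [hag m (by omega)]
          exact le_trans h00 (hπmono 0 m (by omega) (by omega)))
      (by rw [hag (m+1) (by omega)]
          exact le_trans (hπmono (m+1) N (by omega) (le_refl N)) hTT)
    rw [hag m (by omega), hag (m+1) (by omega)] at hbl
    refine le_trans hbl ?_
    apply mul_le_mul_of_nonneg_left _
      (mul_nonneg (mul_nonneg hC2 (Real.rpow_nonneg (by norm_num) _)) (zC_nonneg θ))
    have hgap : 0 < π (m+1) - π m := sub_pos.mpr (hπ m hm)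
    calc (π (m+1) - π m)^θ = (π (m+1) - π m)^(θ-1) * (π (m+1) - π m) := by
          nth_rewrite 1 [show θ = (θ-1) + 1 by ring]
          rw [Real.rpow_add hgap, Real.rpow_one]
      _ ≤ δ^(θ-1) * (π (m+1) - π m) := by
          apply mul_le_mul_of_nonneg_right _ (le_of_lt hgap)
          exact Real.rpow_le_rpow (le_of_lt hgap) (hmesh m hm) (by linarith)
  refine le_trans (Finset.sum_le_sum hterm) ?_
  rw [← Finset.mul_sum, ← Finset.mul_sum, Finset.sum_range_sub π N]
  apply le_of_eq
  ring

private lemma lemD (T θ C2 : ℝ) (A : ℝ → ℝ → ℝ) (hθ : 1 < θ) (hC2 : 0 ≤ C2)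
    (hδ : ∀ s u t : ℝ, 0 ≤ s → s ≤ u → u ≤ t → t ≤ T →
      |A s t - A s u - A u t| ≤ C2 * (t - s) ^ θ)
    (N1 N2 : ℕ) (π1 π2 : ℕ → ℝ) (hN1 : 1 ≤ N1) (hN2 : 1 ≤ N2)
    (hπ1 : ∀ m < N1, π1 m < π1 (m+1)) (hπ2 : ∀ m < N2, π2 m < π2 (m+1))
    (h0 : 0 ≤ π1 0) (heq0 : π2 0 = π1 0) (heqN : π2 N2 = π1 N1) (hT : π1 N1 ≤ T)
    (δ1 δ2 : ℝ) (hm1 : ∀ m < N1, π1 (m+1) - π1 m ≤ δ1)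
    (hm2 : ∀ m < N2, π2 (m+1) - π2 m ≤ δ2) :
    |(∑ m ∈ Finset.range N1, A (π1 m) (π1 (m+1)))
        - ∑ m ∈ Finset.range N2, A (π2 m) (π2 (m+1))|
      ≤ (C2 * 2^θ * zC θ) * (δ1^(θ-1) + δ2^(θ-1)) * (π1 N1 - π1 0) := by
  classical
  have hmono1 := part_mono hπ1
  have hmono2 := part_mono hπ2
  set F : Finset ℝ := ((Finset.range (N1+1)).image π1) ∪ ((Finset.range (N2+1)).image π2)
    with hF
  have hmem1 : ∀ m ≤ N1, π1 m ∈ F := by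
    intro m hm
    apply Finset.mem_union_left
    exact Finset.mem_image.mpr ⟨m, Finset.mem_range.mpr (by omega), rfl⟩
  have hmem2 : ∀ m ≤ N2, π2 m ∈ F := by
    intro m hm
    apply Finset.mem_union_right
    exact Finset.mem_image.mpr ⟨m, Finset.mem_range.mpr (by omega), rfl⟩
  have hmin : ∀ x ∈ F, π1 0 ≤ x := by
    intro x hx
    rw [hF, Finset.mem_union, Finset.mem_image, Finset.mem_image] at hx
    rcases hx with ⟨m, hm, rfl⟩ | ⟨m, hm, rfl⟩
    · exact hmono1 0 m (by omega) (by rw [Finset.mem_range] at hm; omega)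
    · rw [← heq0]
      exact hmono2 0 m (by omega) (by rw [Finset.mem_range] at hm; omega)
  have hmax : ∀ x ∈ F, x ≤ π1 N1 := by
    intro x hx
    rw [hF, Finset.mem_union, Finset.mem_image, Finset.mem_image] at hx
    rcases hx with ⟨m, hm, rfl⟩ | ⟨m, hm, rfl⟩
    · exact hmono1 m N1 (by rw [Finset.mem_range] at hm; omega) (le_refl _)
    · rw [← heqN]
      exact hmono2 m N2 (by rw [Finset.mem_range] at hm; omega) (le_refl _)
  have hnpos : 0 < F.card := Finset.card_pos.mpr ⟨π1 0, hmem1 0 (by omega)⟩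
  set n := F.card with hn
  let e := F.orderIsoOfFin hn.symm
  set ρ : ℕ → ℝ := fun l => if h : l < n then (e ⟨l, h⟩ : ℝ) else 0 with hρdef
  have hρlt : ∀ i j (_ : i < n) (_ : j < n), i < j → ρ i < ρ j := by
    intro i j hi hj hij
    simp only [hρdef, dif_pos hi, dif_pos hj]
    exact Subtype.coe_lt_coe.mpr (e.strictMono (show (⟨i, hi⟩ : Fin n) < ⟨j, hj⟩ from hij))
  have hρmem : ∀ l (_ : l < n), ρ l ∈ F := by
    intro l hl
    simp only [hρdef, dif_pos hl]
    exact (e ⟨l, hl⟩).2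
  -- index maps
  set σ1 : ℕ → ℕ := fun m => if h : π1 m ∈ F then ((e.symm ⟨π1 m, h⟩ : Fin n) : ℕ) else 0
    with hσ1def
  set σ2 : ℕ → ℕ := fun m => if h : π2 m ∈ F then ((e.symm ⟨π2 m, h⟩ : Fin n) : ℕ) else 0
    with hσ2def
  have hσ1lt : ∀ m ≤ N1, σ1 m < n := by
    intro m hm
    simp only [hσ1def, dif_pos (hmem1 m hm)]
    exact (e.symm ⟨π1 m, hmem1 m hm⟩).isLt
  have hσ2lt : ∀ m ≤ N2, σ2 m < n := by
    intro m hm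
    simp only [hσ2def, dif_pos (hmem2 m hm)]
    exact (e.symm ⟨π2 m, hmem2 m hm⟩).isLt
  have hag1 : ∀ m ≤ N1, ρ (σ1 m) = π1 m := by
    intro m hm
    simp only [hσ1def, dif_pos (hmem1 m hm), hρdef,
      dif_pos (e.symm ⟨π1 m, hmem1 m hm⟩).isLt]
    rw [Fin.eta, OrderIso.apply_symm_apply]
  have hag2 : ∀ m ≤ N2, ρ (σ2 m) = π2 m := by
    intro m hm
    simp only [hσ2def, dif_pos (hmem2 m hm), hρdef,
      dif_pos (e.symm ⟨π2 m, hmem2 m hm⟩).isLt]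
    rw [Fin.eta, OrderIso.apply_symm_apply]
  have hσ1mono : ∀ m < N1, σ1 m < σ1 (m+1) := by
    intro m hm
    simp only [hσ1def, dif_pos (hmem1 m (by omega)), dif_pos (hmem1 (m+1) (by omega))]
    exact e.symm.strictMono (Subtype.mk_lt_mk.mpr (hπ1 m hm))
  have hσ2mono : ∀ m < N2, σ2 m < σ2 (m+1) := by
    intro m hm
    simp only [hσ2def, dif_pos (hmem2 m (by omega)), dif_pos (hmem2 (m+1) (by omega))]
    exact e.symm.strictMono (Subtype.mk_lt_mk.mpr (hπ2 m hm))
  have hσ10 : σ1 0 = 0 := by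
    by_contra hne
    have hpos : 0 < σ1 0 := Nat.pos_of_ne_zero hne
    have hlt : ρ 0 < ρ (σ1 0) := hρlt 0 (σ1 0) hnpos (hσ1lt 0 (by omega)) hpos
    rw [hag1 0 (by omega)] at hlt
    exact absurd (hmin _ (hρmem 0 hnpos)) (not_le.mpr hlt)
  have hσ20 : σ2 0 = 0 := by
    by_contra hne
    have hpos : 0 < σ2 0 := Nat.pos_of_ne_zero hne
    have hlt : ρ 0 < ρ (σ2 0) := hρlt 0 (σ2 0) hnpos (hσ2lt 0 (by omega)) hpos
    rw [hag2 0 (by omega), heq0] at hlt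
    exact absurd (hmin _ (hρmem 0 hnpos)) (not_le.mpr hlt)
  have hσ1N : σ1 N1 = n - 1 := by
    by_contra hne
    have hlt2 : σ1 N1 < n - 1 := by
      have := hσ1lt N1 (le_refl _); omega
    have hlt : ρ (σ1 N1) < ρ (n-1) := hρlt _ _ (hσ1lt N1 (le_refl _)) (by omega) hlt2
    rw [hag1 N1 (le_refl _)] at hlt
    exact absurd (hmax _ (hρmem (n-1) (by omega))) (not_le.mpr hlt)
  have hσ2N : σ2 N2 = n - 1 := by
    by_contra hne
    have hlt2 : σ2 N2 < n - 1 := by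
      have := hσ2lt N2 (le_refl _); omega
    have hlt : ρ (σ2 N2) < ρ (n-1) := hρlt _ _ (hσ2lt N2 (le_refl _)) (by omega) hlt2
    rw [hag2 N2 (le_refl _), heqN] at hlt
    exact absurd (hmax _ (hρmem (n-1) (by omega))) (not_le.mpr hlt)
  have hρinc1 : ∀ l < σ1 N1, ρ l < ρ (l+1) := by
    intro l hl
    rw [hσ1N] at hl
    exact hρlt l (l+1) (by omega) (by omega) (by omega)
  have hρinc2 : ∀ l < σ2 N2, ρ l < ρ (l+1) := by
    intro l hl
    rw [hσ2N] at hl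
    exact hρlt l (l+1) (by omega) (by omega) (by omega)
  have hr1 := lemC T θ C2 A hθ hC2 hδ N1 π1 hπ1 h0 hT ρ σ1 hσ10 hσ1mono hag1 hρinc1 δ1 hm1
  have hr2 := lemC T θ C2 A hθ hC2 hδ N2 π2 hπ2 (by rw [heq0]; exact h0)
    (by rw [heqN]; exact hT) ρ σ2 hσ20 hσ2mono hag2 hρinc2 δ2 hm2
  rw [hσ1N] at hr1
  rw [hσ2N, heqN, heq0] at hr2
  calc |(∑ m ∈ Finset.range N1, A (π1 m) (π1 (m+1)))
      - ∑ m ∈ Finset.range N2, A (π2 m) (π2 (m+1))|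
      ≤ |(∑ m ∈ Finset.range N1, A (π1 m) (π1 (m+1)))
          - ∑ l ∈ Finset.range (n-1), A (ρ l) (ρ (l+1))|
        + |(∑ l ∈ Finset.range (n-1), A (ρ l) (ρ (l+1)))
          - ∑ m ∈ Finset.range N2, A (π2 m) (π2 (m+1))| := abs_sub_le _ _ _
    _ = |(∑ l ∈ Finset.range (n-1), A (ρ l) (ρ (l+1)))
          - ∑ m ∈ Finset.range N1, A (π1 m) (π1 (m+1))|
        + |(∑ l ∈ Finset.range (n-1), A (ρ l) (ρ (l+1)))
          - ∑ m ∈ Finset.range N2, A (π2 m) (π2 (m+1))| := by rw [abs_sub_comm]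
    _ ≤ (C2 * 2^θ * zC θ) * δ1^(θ-1) * (π1 N1 - π1 0)
        + (C2 * 2^θ * zC θ) * δ2^(θ-1) * (π1 N1 - π1 0) := add_le_add hr1 hr2
    _ = (C2 * 2^θ * zC θ) * (δ1^(θ-1) + δ2^(θ-1)) * (π1 N1 - π1 0) := by ring

private lemma lemE (T θ C2 : ℝ) (A : ℝ → ℝ → ℝ) (hθ : 1 < θ) (hC2 : 0 ≤ C2)
    (hδ : ∀ s u t : ℝ, 0 ≤ s → s ≤ u → u ≤ t → t ≤ T →
      |A s t - A s u - A u t| ≤ C2 * (t - s) ^ θ)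
    (s t : ℝ) (hs : 0 ≤ s) (hst : s < t) (htT : t ≤ T) :
    ∃ L : ℝ,
      (∀ ε > (0:ℝ), ∃ δ > (0:ℝ), ∀ (N : ℕ) (π : ℕ → ℝ), π 0 = s → π N = t →
        (∀ m < N, π m < π (m+1)) → (∀ m < N, π (m+1) - π m < δ) →
        |(∑ m ∈ Finset.range N, A (π m) (π (m+1))) - L| < ε) ∧
      |L - A s t| ≤ (C2 * 2^θ * zC θ) * (t - s)^θ := by
  set CB : ℝ := C2 * 2^θ * zC θ with hCBdef
  have hCB : 0 ≤ CB :=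
    mul_nonneg (mul_nonneg hC2 (Real.rpow_nonneg (by norm_num) _)) (zC_nonneg θ)
  have hts : 0 < t - s := sub_pos.mpr hst
  set πd : ℕ → ℕ → ℝ := fun j m => s + (t - s) * m / 2^j with hπddef
  have hπd0 : ∀ j, πd j 0 = s := by intro j; simp [hπddef]
  have hπdN : ∀ j, πd j (2^j) = t := by
    intro j
    simp only [hπddef]
    have h2j : ((2:ℝ))^j ≠ 0 := by positivity
    push_cast
    field_simp
    ring
  have hπdlt : ∀ j, ∀ m < 2^j, πd j m < πd j (m+1) := by
    intro j m _
    simp only [hπddef]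
    have h2j : (0:ℝ) < 2^j := by positivity
    have hlt : (t - s) * m < (t - s) * (m+1) := by
      have : (m:ℝ) < (m:ℝ) + 1 := by linarith
      exact (mul_lt_mul_iff_right₀ hts).mpr (by push_cast; linarith)
    have := div_lt_div_of_pos_right hlt h2j
    push_cast at this ⊢
    linarith
  have hπdmesh : ∀ j, ∀ m < 2^j, πd j (m+1) - πd j m = (t - s)/2^j := by
    intro j m _
    simp only [hπddef]
    have h2j : ((2:ℝ))^j ≠ 0 := by positivity
    push_cast
    field_simp
    ring
  set u : ℕ → ℝ := fun j => ∑ m ∈ Finset.range (2^j), A (πd j m) (πd j (m+1)) with hudef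
  -- geometric quantities
  set r : ℝ := ((2:ℝ)^(θ-1))⁻¹ with hrdef
  have h2θ : (1:ℝ) < (2:ℝ)^(θ-1) := by
    rw [show (1:ℝ) = (2:ℝ)^(0:ℝ) by simp]
    exact Real.rpow_lt_rpow_left_iff (by norm_num) |>.mpr (by linarith)
  have hr0 : 0 < r := by rw [hrdef]; positivity
  have hr1 : r < 1 := by
    rw [hrdef, inv_lt_one_iff₀]
    right; exact h2θ
  have hpow : ∀ j : ℕ, ((2:ℝ)^j)^(θ-1) = ((2:ℝ)^(θ-1))^j := by
    intro j
    rw [← Real.rpow_natCast 2 j, ← Real.rpow_mul (by norm_num), mul_comm,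
      Real.rpow_mul (by norm_num), Real.rpow_natCast]
  have hmesh_pow : ∀ j : ℕ, ((t-s)/2^j)^(θ-1) = (t-s)^(θ-1) * r^j := by
    intro j
    rw [Real.div_rpow (le_of_lt hts) (by positivity), hpow, div_eq_mul_inv, ← inv_pow]
  have hone : ∀ j : ℕ, 1 ≤ 2^j := fun j => Nat.one_le_two_pow
  have hdist : ∀ j : ℕ, dist (u j) (u (j+1)) ≤ (2*CB*(t-s)^(θ-1)*(t-s)) * r^j := by
    intro j
    rw [Real.dist_eq]
    have hD := lemD T θ C2 A hθ hC2 hδ (2^j) (2^(j+1)) (πd j) (πd (j+1))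
      (hone j) (hone (j+1)) (hπdlt j) (hπdlt (j+1))
      (by rw [hπd0]; exact hs) (by rw [hπd0, hπd0]) (by rw [hπdN, hπdN])
      (by rw [hπdN]; exact htT)
      ((t-s)/2^j) ((t-s)/2^j)
      (fun m hm => le_of_eq (hπdmesh j m hm))
      (fun m hm => by
        rw [hπdmesh (j+1) m hm]
        apply div_le_div_of_nonneg_left (le_of_lt hts) (by positivity)
        exact pow_le_pow_right₀ (by norm_num) (by omega))
    rw [hπdN, hπd0] at hD
    refine le_trans hD (le_of_eq ?_)
    rw [hmesh_pow j]
    ring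
  have hcauchy : CauchySeq u := cauchySeq_of_le_geometric r _ hr1 hdist
  obtain ⟨L, hL⟩ := cauchySeq_tendsto_of_complete hcauchy
  have hUB : ∀ j, |u j - A s t| ≤ CB * (t-s)^θ := by
    intro j
    have hB := lemB2 T θ C2 A hθ hC2 hδ (2^j) (πd j) (hone j) (hπdlt j)
      (by rw [hπd0]; exact hs) (by rw [hπdN]; exact htT)
    rw [hπd0, hπdN] at hB
    exact hB
  refine ⟨L, ?_, ?_⟩
  · intro ε hε
    have hgeo : Filter.Tendsto (fun j : ℕ => (CB*(t-s)^(θ-1)*(t-s)) * r^j)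
        Filter.atTop (nhds 0) := by
      rw [show (0:ℝ) = (CB*(t-s)^(θ-1)*(t-s)) * 0 by ring]
      exact (tendsto_pow_atTop_nhds_zero_of_lt_one (le_of_lt hr0) hr1).const_mul _
    have hev1 : ∀ᶠ j in Filter.atTop, (CB*(t-s)^(θ-1)*(t-s)) * r^j < ε/4 :=
      hgeo.eventually_lt_const (by linarith : (0:ℝ) < ε/4)
    obtain ⟨j0, hj0⟩ := hev1.exists
    obtain ⟨n1, hn1⟩ := Metric.tendsto_atTop.mp hL (ε/2) (by linarith)
    set n := max j0 n1 with hndef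
    refine ⟨(t-s)/2^j0, by positivity, ?_⟩
    intro N π hπ0 hπN hπlt hπmesh
    have hN1 : 1 ≤ N := by
      by_contra h
      have hN0 : N = 0 := by omega
      rw [hN0, hπ0] at hπN
      linarith
    have hD := lemD T θ C2 A hθ hC2 hδ N (2^n) π (πd n) hN1 (hone n) hπlt (hπdlt n)
      (by rw [hπ0]; exact hs) (by rw [hπd0, hπ0]) (by rw [hπdN, hπN])
      (by rw [hπN]; exact htT)
      ((t-s)/2^j0) ((t-s)/2^j0)
      (fun m hm => le_of_lt (hπmesh m hm))
      (fun m hm => by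
        rw [hπdmesh n m hm]
        apply div_le_div_of_nonneg_left (le_of_lt hts) (by positivity)
        exact pow_le_pow_right₀ (by norm_num) (le_max_left _ _))
    rw [hπN, hπ0] at hD
    have hRHS : CB * (((t-s)/2^j0)^(θ-1) + ((t-s)/2^j0)^(θ-1)) * (t - s) < ε/2 := by
      rw [hmesh_pow j0]
      calc CB * ((t-s)^(θ-1) * r^j0 + (t-s)^(θ-1) * r^j0) * (t - s)
          = 2 * ((CB*(t-s)^(θ-1)*(t-s)) * r^j0) := by ring
        _ < 2 * (ε/4) := by linarith
        _ = ε/2 := by ring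
    have hun : |u n - L| < ε/2 := by
      have := hn1 n (le_max_right _ _)
      rwa [Real.dist_eq] at this
    calc |(∑ m ∈ Finset.range N, A (π m) (π (m+1))) - L|
        ≤ |(∑ m ∈ Finset.range N, A (π m) (π (m+1))) - u n| + |u n - L| :=
          abs_sub_le _ _ _
      _ < ε/2 + ε/2 := add_lt_add (lt_of_le_of_lt hD hRHS) hun
      _ = ε := by ring
  · have habs : Filter.Tendsto (fun j => |u j - A s t|) Filter.atTop
        (nhds |L - A s t|) := (hL.sub_const _).abs
    exact le_of_tendsto habs (Filter.Eventually.of_forall hUB)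


/-- existence of the rough integral (one-dimensional case).  The
compensated Riemann sums along partitions of `[s,t]` converge as the mesh tends
to `0`, to a limit `I_{s,t}` which satisfies the local estimate
`|I_{s,t} − ∑_{i=1}^k Y^{(i)}_s 𝕏^i_{s,t}| ≤ K (t−s)^{(k+1)α}`. -/
theorem rough_integral_exists
    (T α : ℝ) (hT : 0 < T) (hα : 0 < α) (hα1 : α ≤ 1)
    (k : ℕ) (hk : k = ⌊1 / α⌋₊)
    (𝕏 : ℕ → ℝ → ℝ → ℝ) (C𝕏 : ℝ)
    (h0 : ∀ s t : ℝ, 0 ≤ s → s ≤ t → t ≤ T → 𝕏 0 s t = 1)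
    (hChen : ∀ n, n ≤ k → ∀ s u t : ℝ, 0 ≤ s → s ≤ u → u ≤ t → t ≤ T →
      𝕏 n s t = ∑ j ∈ Finset.range (n + 1), 𝕏 j s u * 𝕏 (n - j) u t)
    (hHol : ∀ n, 1 ≤ n → n ≤ k → ∀ s t : ℝ, 0 ≤ s → s ≤ t → t ≤ T →
      |𝕏 n s t| ≤ C𝕏 * (t - s) ^ ((n : ℝ) * α))
    (Y : ℕ → ℝ → ℝ) (CY : ℝ)
    (hY : ∀ i, 1 ≤ i → i ≤ k → ∀ s t : ℝ, 0 ≤ s → s ≤ t → t ≤ T →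
      |Y i t - Y i s - ∑ j ∈ Finset.Icc (i + 1) k, Y j s * 𝕏 (j - i) s t|
        ≤ CY * (t - s) ^ (((k + 1 - i : ℕ) : ℝ) * α)) :
    ∃ I : ℝ → ℝ → ℝ,
      (∀ s t : ℝ, 0 ≤ s → s ≤ t → t ≤ T → ∀ ε > (0 : ℝ), ∃ δ > (0 : ℝ),
        ∀ (N : ℕ) (π : ℕ → ℝ), π 0 = s → π N = t →
          (∀ m < N, π m < π (m + 1)) → (∀ m < N, π (m + 1) - π m < δ) →
          |(∑ m ∈ Finset.range N, ∑ i ∈ Finset.Icc 1 k,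
              Y i (π m) * 𝕏 i (π m) (π (m + 1))) - I s t| < ε) ∧
      (∃ K : ℝ, ∀ s t : ℝ, 0 ≤ s → s ≤ t → t ≤ T →
        |I s t - ∑ i ∈ Finset.Icc 1 k, Y i s * 𝕏 i s t|
          ≤ K * (t - s) ^ (((k + 1 : ℕ) : ℝ) * α)) := by

  set θ : ℝ := ((k + 1 : ℕ) : ℝ) * α with hθdef
  set A : ℝ → ℝ → ℝ := fun x y => ∑ i ∈ Finset.Icc 1 k, Y i x * 𝕏 i x y with hAdef
  set C2 : ℝ := (k : ℝ) * (max C𝕏 0 * max CY 0) with hC2def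
  have hθ1 : 1 < θ := by
    rw [hθdef]
    have h1 : 1 / α < (k : ℝ) + 1 := by
      rw [hk]
      push_cast
      exact Nat.lt_floor_add_one (1 / α)
    have h2 : (1:ℝ) < ((k:ℝ) + 1) * α := (div_lt_iff₀ hα).mp h1
    push_cast
    exact h2
  have hC2 : 0 ≤ C2 := by rw [hC2def]; positivity
  have hδA : ∀ s u t : ℝ, 0 ≤ s → s ≤ u → u ≤ t → t ≤ T →
      |A s t - A s u - A u t| ≤ C2 * (t - s) ^ θ :=
    deltaA T α hα k 𝕏 C𝕏 h0 hChen hHol Y CY hY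
  have main : ∀ s t : ℝ, ∃ L : ℝ,
      ((0 ≤ s ∧ s < t ∧ t ≤ T) →
        ((∀ ε > (0:ℝ), ∃ δ > (0:ℝ), ∀ (N : ℕ) (π : ℕ → ℝ), π 0 = s → π N = t →
          (∀ m < N, π m < π (m+1)) → (∀ m < N, π (m+1) - π m < δ) →
          |(∑ m ∈ Finset.range N, A (π m) (π (m+1))) - L| < ε) ∧
        |L - A s t| ≤ (C2 * 2^θ * zC θ) * (t - s)^θ)) ∧
      (¬(0 ≤ s ∧ s < t ∧ t ≤ T) → L = 0) := by
    intro s t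
    by_cases h : 0 ≤ s ∧ s < t ∧ t ≤ T
    · obtain ⟨L, h1, h2⟩ := lemE T θ C2 A hθ1 hC2 hδA s t h.1 h.2.1 h.2.2
      exact ⟨L, fun _ => ⟨h1, h2⟩, fun hc => absurd h hc⟩
    · exact ⟨0, fun hc => absurd hc h, fun _ => rfl⟩
  choose I hImain using main
  refine ⟨I, ?_, ⟨C2 * 2^θ * zC θ, ?_⟩⟩
  · intro s t hs hst htT ε hε
    rcases eq_or_lt_of_le hst with rfl | hlt
    · refine ⟨1, by norm_num, ?_⟩
      intro N π hπ0 hπN hπlt _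
      have hN0 : N = 0 := by
        by_contra hN
        have h1 : π 0 < π 1 := hπlt 0 (by omega)
        have h2 : π 1 ≤ π N := part_mono hπlt 1 N (by omega) (le_refl _)
        rw [hπ0, hπN] at *
        linarith
      have hI0 : I s s = 0 := (hImain s s).2 (fun hc => lt_irrefl s hc.2.1)
      rw [hN0, hI0]
      simpa using hε
    · exact ((hImain s t).1 ⟨hs, hlt, htT⟩).1 ε hε
  · intro s t hs hst htT
    rcases eq_or_lt_of_le hst with rfl | hlt
    · have hI0 : I s s = 0 := (hImain s s).2 (fun hc => lt_irrefl s hc.2.1)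
      have hA0 : ∑ i ∈ Finset.Icc 1 k, Y i s * 𝕏 i s s = 0 := by
        apply Finset.sum_eq_zero
        intro i hi
        rw [Finset.mem_Icc] at hi
        have h1 := hHol i hi.1 hi.2 s s hs (le_refl s) htT
        rw [sub_self, Real.zero_rpow
          (ne_of_gt (mul_pos (Nat.cast_pos.mpr (by omega : 0 < i)) hα)), mul_zero] at h1
        have h2 : 𝕏 i s s = 0 := abs_eq_zero.mp (le_antisymm h1 (abs_nonneg _))
        rw [h2, mul_zero]
      rw [hI0, hA0, sub_self, sub_self, abs_zero,
        Real.zero_rpow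
          (ne_of_gt (mul_pos (Nat.cast_pos.mpr (by omega : 0 < k + 1)) hα)), mul_zero]
    · exact ((hImain s t).1 ⟨hs, hlt, htT⟩).2
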